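/- Let F be a nonempty family of subsets of [n] and let p be the probability that a uniformly random maximal chain of 2^[n] meets F. Then there exists A ∈ F such that ℓ(F; [A,[n]]) ≥ ℓ(F)/p, where ℓ(F; I) denotes the expected number of times a uniformly random maximal chain of the interval I meets F. -/

import Mathlib

open Finset

/-- The initial segment of size `k` of the maximal chain corresponding to the
permutation `σ` of `[n]`. -/
def initSeg {n : ℕ} (σ : Equiv.Perm (Fin n)) (k : ℕ) : Finset (Fin n) :=
  Finset.univ.filter (fun i => (σ.symm i : ℕ) < k)

namespace UpLubell

variable {n : ℕ}

def lowSet (n k : ℕ) : Finset (Fin n) := Finset.univ.filter (fun i => (i : ℕ) < k)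

lemma mem_lowSet {k : ℕ} {i : Fin n} : i ∈ lowSet n k ↔ (i : ℕ) < k := by
  simp [lowSet]

lemma initSeg_eq_image (σ : Equiv.Perm (Fin n)) (k : ℕ) :
    initSeg σ k = (lowSet n k).image σ := by
  ext i
  simp only [initSeg, mem_filter, mem_univ, true_and, mem_image, mem_lowSet]
  constructor
  · intro h
    exact ⟨σ.symm i, by simpa [mem_lowSet] using h, by simp⟩
  · rintro ⟨j, hj, rfl⟩
    simpa [mem_lowSet] using hj

lemma lowSet_card {k : ℕ} (h : k ≤ n) : (lowSet n k).card = k := by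
  have he : lowSet n k = (Finset.univ : Finset (Fin k)).image (Fin.castLE h) := by
    ext i
    simp only [mem_lowSet, mem_image, mem_univ, true_and]
    constructor
    · intro hi; exact ⟨⟨(i : ℕ), hi⟩, by ext; simp⟩
    · rintro ⟨j, rfl⟩; simpa using j.isLt
  rw [he, Finset.card_image_of_injective _ (Fin.castLE_injective h), card_univ,
    Fintype.card_fin]

lemma lowSet_mono {j k : ℕ} (h : j ≤ k) : lowSet n j ⊆ lowSet n k := fun i hi =>
  mem_lowSet.2 (lt_of_lt_of_le (mem_lowSet.1 hi) h)

lemma lowSet_zero : lowSet n 0 = ∅ := by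
  ext i; simp [mem_lowSet]

lemma initSeg_card (σ : Equiv.Perm (Fin n)) {k : ℕ} (h : k ≤ n) : (initSeg σ k).card = k := by
  rw [initSeg_eq_image, Finset.card_image_of_injective _ σ.injective, lowSet_card h]

lemma initSeg_mono (σ : Equiv.Perm (Fin n)) {j k : ℕ} (h : j ≤ k) :
    initSeg σ j ⊆ initSeg σ k := by
  rw [initSeg_eq_image, initSeg_eq_image]
  exact Finset.image_subset_image (lowSet_mono h)

lemma initSeg_trans (σ π : Equiv.Perm (Fin n)) (k : ℕ) :
    initSeg (σ.trans π) k = (initSeg σ k).image π := by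
  rw [initSeg_eq_image, initSeg_eq_image, Finset.image_image]
  rfl

lemma exists_perm_image {α : Type*} [Fintype α] [DecidableEq α] {s t : Finset α}
    (h : s.card = t.card) : ∃ ρ : Equiv.Perm α, s.image ρ = t := by
  have hs : Fintype.card {x // x ∈ s} = Fintype.card {x // x ∈ t} := by
    rw [Fintype.card_coe, Fintype.card_coe, h]
  have hs' : Fintype.card {x // ¬ x ∈ s} = Fintype.card {x // ¬ x ∈ t} := by
    rw [Fintype.card_subtype_compl, Fintype.card_subtype_compl, Fintype.card_coe,
      Fintype.card_coe, h]
  let e₁ := Fintype.equivOfCardEq hs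
  let e₂ := Fintype.equivOfCardEq hs'
  refine ⟨((Equiv.sumCompl (· ∈ s)).symm.trans ((e₁.sumCongr e₂).trans
    (Equiv.sumCompl (· ∈ t)))), ?_⟩
  apply Finset.eq_of_subset_of_card_le
  · intro y hy
    simp only [mem_image] at hy
    obtain ⟨x, hx, rfl⟩ := hy
    have h1 : (Equiv.sumCompl (· ∈ s)).symm x = Sum.inl ⟨x, hx⟩ :=
      Equiv.sumCompl_symm_apply_of_pos hx
    simp only [Equiv.trans_apply, h1, Equiv.sumCongr_apply, Sum.map_inl,
      Equiv.sumCompl_apply_inl]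
    exact (e₁ ⟨x, hx⟩).2
  · rw [Finset.card_image_of_injective _ (Equiv.injective _), h]

lemma exists_perm_fix_image {a : ℕ} {D₁ D₂ : Finset (Fin n)} (hc : D₁.card = D₂.card)
    (h1 : lowSet n a ⊆ D₁) (h2 : lowSet n a ⊆ D₂) :
    ∃ π : Equiv.Perm (Fin n), (∀ i : Fin n, (i : ℕ) < a → π i = i) ∧ D₁.image π = D₂ := by
  classical
  set p : Fin n → Prop := fun x => ¬ ((x : ℕ) < a) with hp
  have hcard : ((D₁ \ lowSet n a).subtype p).card = ((D₂ \ lowSet n a).subtype p).card := by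
    rw [Finset.card_subtype, Finset.card_subtype,
      Finset.filter_true_of_mem, Finset.filter_true_of_mem,
      Finset.card_sdiff_of_subset h1, Finset.card_sdiff_of_subset h2, hc]
    · intro x hx
      exact fun hlt => (Finset.mem_sdiff.1 hx).2 (mem_lowSet.2 hlt)
    · intro x hx
      exact fun hlt => (Finset.mem_sdiff.1 hx).2 (mem_lowSet.2 hlt)
  obtain ⟨ρ, hρ⟩ := exists_perm_image hcard
  refine ⟨Equiv.Perm.ofSubtype ρ, ?_, ?_⟩
  · intro i hi
    exact Equiv.Perm.ofSubtype_apply_of_not_mem ρ (by simp [hp, hi])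
  · apply Finset.eq_of_subset_of_card_le
    · intro y hy
      simp only [mem_image] at hy
      obtain ⟨x, hx, rfl⟩ := hy
      by_cases hxa : (x : ℕ) < a
      · rw [Equiv.Perm.ofSubtype_apply_of_not_mem ρ (by simp [hp, hxa])]
        exact h2 (mem_lowSet.2 hxa)
      · rw [Equiv.Perm.ofSubtype_apply_of_mem ρ hxa]
        have hmem : (⟨x, hxa⟩ : Subtype p) ∈ (D₁ \ lowSet n a).subtype p := by
          rw [Finset.mem_subtype]
          exact Finset.mem_sdiff.2 ⟨hx, fun hm => hxa (mem_lowSet.1 hm)⟩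
        have := Finset.mem_image_of_mem ρ hmem
        rw [hρ, Finset.mem_subtype] at this
        exact (Finset.mem_sdiff.1 this).1
    · rw [Finset.card_image_of_injective _ (Equiv.injective _), hc]


def Hgrp (n a : ℕ) : Finset (Equiv.Perm (Fin n)) :=
  Finset.univ.filter (fun h => ∀ i : Fin n, (i : ℕ) < a → h i = i)

lemma mem_Hgrp {a : ℕ} {h : Equiv.Perm (Fin n)} :
    h ∈ Hgrp n a ↔ ∀ i : Fin n, (i : ℕ) < a → h i = i := by
  simp [Hgrp]

lemma Hgrp_symm {a : ℕ} {h : Equiv.Perm (Fin n)} (hh : h ∈ Hgrp n a) :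
    h.symm ∈ Hgrp n a := by
  rw [mem_Hgrp] at hh ⊢
  intro i hi
  conv_lhs => rw [← hh i hi]
  simp

lemma Hgrp_trans {a : ℕ} {h g : Equiv.Perm (Fin n)} (hh : h ∈ Hgrp n a)
    (hg : g ∈ Hgrp n a) : h.trans g ∈ Hgrp n a := by
  rw [mem_Hgrp] at hh hg ⊢
  intro i hi
  simp [Equiv.trans_apply, hh i hi, hg i hi]

lemma Hgrp_image_lowSet {a k : ℕ} {h : Equiv.Perm (Fin n)} (hh : h ∈ Hgrp n a)
    (hk : k ≤ a) : (lowSet n k).image h = lowSet n k := by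
  rw [mem_Hgrp] at hh
  have : ∀ x ∈ lowSet n k, h x = id x := fun x hx =>
    hh x (lt_of_lt_of_le (mem_lowSet.1 hx) hk)
  rw [Finset.image_congr this, Finset.image_id]

lemma Hgrp_initSeg {a k : ℕ} {h : Equiv.Perm (Fin n)} (hh : h ∈ Hgrp n a)
    (hk : k ≤ a) : initSeg h k = lowSet n k := by
  rw [initSeg_eq_image, Hgrp_image_lowSet hh hk]

lemma gcount_const {a b : ℕ} (D₁ D₂ : Finset (Fin n))
    (hD₁ : D₁.card = b) (hD₂ : D₂.card = b)
    (h1 : lowSet n a ⊆ D₁) (h2 : lowSet n a ⊆ D₂) :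
    ((Hgrp n a).filter (fun h => initSeg h b = D₁)).card
      = ((Hgrp n a).filter (fun h => initSeg h b = D₂)).card := by
  obtain ⟨π, hπfix, hπim⟩ := exists_perm_fix_image (hD₁.trans hD₂.symm) h1 h2
  have hπmem : π ∈ Hgrp n a := mem_Hgrp.2 hπfix
  have hπim' : D₂.image π.symm = D₁ := by
    rw [← hπim, Finset.image_image]
    simp
  refine Finset.card_bij' (fun h _ => h.trans π) (fun h _ => h.trans π.symm) ?_ ?_ ?_ ?_
  · intro h hh
    rw [Finset.mem_filter] at hh ⊢
    refine ⟨Hgrp_trans hh.1 hπmem, ?_⟩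
    rw [initSeg_trans, hh.2, hπim]
  · intro h hh
    rw [Finset.mem_filter] at hh ⊢
    refine ⟨Hgrp_trans hh.1 (Hgrp_symm hπmem), ?_⟩
    rw [initSeg_trans, hh.2, hπim']
  · intro h _
    ext x
    simp
  · intro h _
    ext x
    simp

lemma card_validD {a b : ℕ} (hab : a ≤ b) (hb : b ≤ n) :
    (((Finset.univ : Finset (Fin n)).powersetCard b).filter
      (fun D => lowSet n a ⊆ D)).card = (n - a).choose (b - a) := by
  have ha : a ≤ n := hab.trans hb
  have hkey : (((Finset.univ : Finset (Fin n)).powersetCard b).filter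
      (fun D => lowSet n a ⊆ D)).card = ((lowSet n a)ᶜ.powersetCard (b - a)).card := by
    refine Finset.card_bij' (fun D _ => D \ lowSet n a) (fun E _ => E ∪ lowSet n a)
      ?_ ?_ ?_ ?_
    · intro D hD
      rw [Finset.mem_filter, Finset.mem_powersetCard_univ] at hD
      rw [Finset.mem_powersetCard]
      refine ⟨?_, ?_⟩
      · intro x hx
        rw [Finset.mem_sdiff] at hx
        exact Finset.mem_compl.2 hx.2
      · rw [Finset.card_sdiff_of_subset hD.2, hD.1, lowSet_card ha]
    · intro E hE
      rw [Finset.mem_powersetCard] at hE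
      have hdisj : Disjoint E (lowSet n a) := by
        rw [Finset.disjoint_left]
        intro x hx hx'
        exact Finset.mem_compl.1 (hE.1 hx) hx'
      rw [Finset.mem_filter, Finset.mem_powersetCard_univ]
      refine ⟨?_, Finset.subset_union_right⟩
      rw [Finset.card_union_of_disjoint hdisj, hE.2, lowSet_card ha]
      omega
    · intro D hD
      rw [Finset.mem_filter] at hD
      exact Finset.sdiff_union_of_subset hD.2
    · intro E hE
      rw [Finset.mem_powersetCard] at hE
      have hdisj : Disjoint E (lowSet n a) := by
        rw [Finset.disjoint_left]
        intro x hx hx'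
        exact Finset.mem_compl.1 (hE.1 hx) hx'
      show (E ∪ lowSet n a) \ lowSet n a = E
      rw [Finset.union_sdiff_distrib, Finset.sdiff_self, Finset.union_empty,
        Finset.sdiff_eq_self_of_disjoint hdisj]
  rw [hkey, Finset.card_powersetCard, Finset.card_compl, lowSet_card ha, Fintype.card_fin]

lemma Hgrp_card_eq {a b : ℕ} (hab : a ≤ b) (hb : b ≤ n) (D : Finset (Fin n))
    (hD : D.card = b) (hsub : lowSet n a ⊆ D) :
    (Hgrp n a).card = (n - a).choose (b - a)
      * ((Hgrp n a).filter (fun h => initSeg h b = D)).card := by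
  have ha : a ≤ n := hab.trans hb
  have hmaps : ∀ h ∈ Hgrp n a, initSeg h b ∈
      ((Finset.univ : Finset (Fin n)).powersetCard b).filter (fun D' => lowSet n a ⊆ D') := by
    intro h hh
    rw [Finset.mem_filter, Finset.mem_powersetCard_univ]
    refine ⟨initSeg_card h hb, ?_⟩
    have := Hgrp_initSeg hh (le_refl a)
    rw [← this]
    exact initSeg_mono h hab
  rw [Finset.card_eq_sum_card_fiberwise hmaps]
  rw [Finset.sum_congr rfl (fun D' hD' => ?_), Finset.sum_const, card_validD hab hb,
    smul_eq_mul]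
  rw [Finset.mem_filter, Finset.mem_powersetCard_univ] at hD'
  exact gcount_const D' D hD'.1 hD hD'.2 hsub

lemma Hgrp_zero : Hgrp n 0 = Finset.univ := by
  ext h
  simp [mem_Hgrp]

lemma count_initSeg (B : Finset (Fin n)) (hB : B.card ≤ n) :
    n.factorial = n.choose B.card
      * (Finset.univ.filter (fun σ : Equiv.Perm (Fin n) => initSeg σ B.card = B)).card := by
  have h := Hgrp_card_eq (Nat.zero_le B.card) hB B rfl
    (by rw [lowSet_zero]; exact Finset.empty_subset _)
  rw [Hgrp_zero] at h
  simpa [Finset.card_univ, Fintype.card_perm] using h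

def isFH (F : Finset (Finset (Fin n))) (σ : Equiv.Perm (Fin n)) (A : Finset (Fin n)) : Prop :=
  initSeg σ A.card = A ∧ ∀ j < A.card, initSeg σ j ∉ F

instance (F : Finset (Finset (Fin n))) (A : Finset (Fin n)) :
    DecidablePred (fun σ : Equiv.Perm (Fin n) => isFH F σ A) := fun σ => by
  unfold isFH; infer_instance

lemma isFH_trans {F : Finset (Finset (Fin n))} {A : Finset (Fin n)} {σ h : Equiv.Perm (Fin n)}
    (hh : h ∈ Hgrp n A.card) (hσ : isFH F σ A) : isFH F (h.trans σ) A := by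
  have key : ∀ j ≤ A.card, initSeg (h.trans σ) j = initSeg σ j := by
    intro j hj
    rw [initSeg_trans, Hgrp_initSeg hh hj, initSeg_eq_image]
  constructor
  · rw [key _ le_rfl]; exact hσ.1
  · intro j hj; rw [key _ (le_of_lt hj)]; exact hσ.2 j hj

lemma key_count (F : Finset (Finset (Fin n))) {A B : Finset (Fin n)} (hAB : A ⊆ B)
    (hBn : B.card ≤ n) :
    (Finset.univ.filter (fun σ : Equiv.Perm (Fin n) => isFH F σ A)).card
      = (n - A.card).choose (B.card - A.card)
        * (Finset.univ.filter (fun σ : Equiv.Perm (Fin n) =>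
            isFH F σ A ∧ initSeg σ B.card = B)).card := by
  classical
  set a := A.card with hadef
  set b := B.card with hbdef
  have hab : a ≤ b := Finset.card_le_card hAB
  have hbD : (lowSet n b).card = b := lowSet_card hBn
  have hlowsub : lowSet n a ⊆ lowSet n b := lowSet_mono hab
  set g₀ := ((Hgrp n a).filter (fun h => initSeg h b = lowSet n b)).card with hg₀
  have hg₀pos : 0 < g₀ := by
    rw [hg₀]
    refine Finset.card_pos.2 ⟨Equiv.refl _, ?_⟩
    rw [Finset.mem_filter]
    refine ⟨mem_Hgrp.2 (fun i _ => rfl), ?_⟩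
    rw [initSeg_eq_image]
    simp
  have claim1 : ∀ σ : Equiv.Perm (Fin n), isFH F σ A →
      ((Hgrp n a).filter (fun h => initSeg (h.trans σ) b = B)).card = g₀ := by
    intro σ hσ
    have hfil : ∀ h : Equiv.Perm (Fin n),
        (initSeg (h.trans σ) b = B) ↔ (initSeg h b = B.image σ.symm) := by
      intro h
      rw [initSeg_trans]
      constructor
      · intro he
        rw [← he, Finset.image_image]
        simp
      · intro he
        rw [he, Finset.image_image]
        simp
    rw [Finset.filter_congr (fun h _ => hfil h)]
    refine gcount_const _ _ ?_ hbD ?_ hlowsub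
    · rw [Finset.card_image_of_injective _ σ.symm.injective]
    · intro x hx
      have hσx : σ x ∈ A := by
        rw [← hσ.1, initSeg_eq_image]
        exact Finset.mem_image_of_mem _ hx
      rw [Finset.mem_image]
      exact ⟨σ x, hAB hσx, by simp⟩
  set SA := Finset.univ.filter (fun σ : Equiv.Perm (Fin n) => isFH F σ A) with hSA
  set T := Finset.univ.filter (fun σ : Equiv.Perm (Fin n) =>
      isFH F σ A ∧ initSeg σ b = B) with hT
  set Q := (SA ×ˢ Hgrp n a).filter
      (fun q : Equiv.Perm (Fin n) × Equiv.Perm (Fin n) => initSeg (q.2.trans q.1) b = B)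
      with hQ
  have count1 : Q.card = SA.card * g₀ := by
    have hmaps : ∀ q ∈ Q, q.1 ∈ SA := fun q hq =>
      (Finset.mem_product.1 (Finset.mem_filter.1 hq).1).1
    rw [Finset.card_eq_sum_card_fiberwise hmaps]
    rw [Finset.sum_congr rfl (fun σ hσ => ?_), Finset.sum_const, smul_eq_mul]
    have hσ' : isFH F σ A := (Finset.mem_filter.1 hσ).2
    rw [← claim1 σ hσ']
    refine Finset.card_bij' (fun q _ => q.2) (fun h _ => (σ, h)) ?_ ?_ ?_ ?_
    · intro q hq
      rw [Finset.mem_filter] at hq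
      obtain ⟨hq1, hq2⟩ := hq
      rw [hQ, Finset.mem_filter, Finset.mem_product] at hq1
      rw [Finset.mem_filter]
      refine ⟨hq1.1.2, ?_⟩
      rw [hq2] at hq1
      exact hq1.2
    · intro h hh
      rw [Finset.mem_filter] at hh
      rw [Finset.mem_filter, hQ, Finset.mem_filter, Finset.mem_product]
      exact ⟨⟨⟨hσ, hh.1⟩, hh.2⟩, rfl⟩
    · intro q hq
      rw [Finset.mem_filter] at hq
      exact Prod.ext hq.2.symm rfl
    · intro h _
      rfl
  have count2 : Q.card = T.card * (Hgrp n a).card := by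
    have hmaps : ∀ q ∈ Q, q.2.trans q.1 ∈ T := by
      intro q hq
      rw [hQ, Finset.mem_filter, Finset.mem_product] at hq
      rw [hT, Finset.mem_filter]
      refine ⟨Finset.mem_univ _, ?_, hq.2⟩
      exact isFH_trans hq.1.2 ((Finset.mem_filter.1 hq.1.1).2)
    rw [Finset.card_eq_sum_card_fiberwise hmaps]
    rw [Finset.sum_congr rfl (fun τ hτ => ?_), Finset.sum_const, smul_eq_mul]
    rw [hT, Finset.mem_filter] at hτ
    refine Finset.card_bij' (fun q _ => q.2) (fun h _ => (h.symm.trans τ, h)) ?_ ?_ ?_ ?_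
    · intro q hq
      rw [Finset.mem_filter] at hq
      rw [hQ, Finset.mem_filter, Finset.mem_product] at hq
      exact hq.1.1.2
    · intro h hh
      have htr : h.trans (h.symm.trans τ) = τ := by
        ext x
        simp
      rw [Finset.mem_filter, hQ, Finset.mem_filter, Finset.mem_product]
      refine ⟨⟨⟨?_, hh⟩, ?_⟩, ?_⟩
      · rw [hSA, Finset.mem_filter]
        exact ⟨Finset.mem_univ _, isFH_trans (Hgrp_symm hh) hτ.2.1⟩
      · show initSeg (h.trans (h.symm.trans τ)) b = B
        rw [htr]
        exact hτ.2.2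
      · exact htr
    · intro q hq
      rw [Finset.mem_filter] at hq
      have : q.2.symm.trans τ = q.1 := by
        rw [← hq.2]
        ext x
        simp
      exact Prod.ext this rfl
    · intro h _
      rfl
  have hHcard := Hgrp_card_eq hab hBn (lowSet n b) hbD hlowsub
  have hfinal : SA.card * g₀ = ((n - a).choose (b - a) * T.card) * g₀ := by
    rw [← count1, count2, hHcard]
    ring
  exact Nat.eq_of_mul_eq_mul_right hg₀pos hfinal

noncomputable def hitIdx (F : Finset (Finset (Fin n))) (σ : Equiv.Perm (Fin n)) : ℕ :=
  @dite _ (∃ j, initSeg σ j ∈ F) (Classical.dec _) (fun h => Nat.find h) (fun _ => 0)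

noncomputable def fh (F : Finset (Finset (Fin n))) (σ : Equiv.Perm (Fin n)) :
    Finset (Fin n) := initSeg σ (hitIdx F σ)

lemma hitIdx_spec {F : Finset (Finset (Fin n))} {σ : Equiv.Perm (Fin n)}
    (hex : ∃ j, initSeg σ j ∈ F) : initSeg σ (hitIdx F σ) ∈ F := by
  rw [hitIdx, dif_pos hex]
  exact Nat.find_spec hex

lemma hitIdx_le {F : Finset (Finset (Fin n))} {σ : Equiv.Perm (Fin n)} {j : ℕ}
    (h : initSeg σ j ∈ F) : hitIdx F σ ≤ j := by
  rw [hitIdx, dif_pos ⟨j, h⟩]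
  exact Nat.find_min' _ h

lemma hitIdx_min {F : Finset (Finset (Fin n))} {σ : Equiv.Perm (Fin n)} {j : ℕ}
    (hex : ∃ j, initSeg σ j ∈ F) (h : j < hitIdx F σ) : initSeg σ j ∉ F := by
  rw [hitIdx, dif_pos hex] at h
  exact Nat.find_min hex h

lemma fh_mem {F : Finset (Finset (Fin n))} {σ : Equiv.Perm (Fin n)}
    (hex : ∃ j, initSeg σ j ∈ F) : fh F σ ∈ F := hitIdx_spec hex

lemma fh_card {F : Finset (Finset (Fin n))} {σ : Equiv.Perm (Fin n)}
    (hn : hitIdx F σ ≤ n) : (fh F σ).card = hitIdx F σ := initSeg_card σ hn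

lemma isFH_fh {F : Finset (Finset (Fin n))} {σ : Equiv.Perm (Fin n)}
    (hex : ∃ j, initSeg σ j ∈ F) (hn : hitIdx F σ ≤ n) : isFH F σ (fh F σ) := by
  constructor
  · rw [fh_card hn]
    rfl
  · intro j hj
    rw [fh_card hn] at hj
    exact hitIdx_min hex hj

lemma fh_eq {F : Finset (Finset (Fin n))} {σ : Equiv.Perm (Fin n)} {A : Finset (Fin n)}
    (hA : A ∈ F) (h : isFH F σ A) : fh F σ = A := by
  have hex : ∃ j, initSeg σ j ∈ F := ⟨A.card, by rw [h.1]; exact hA⟩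
  have hle : hitIdx F σ ≤ A.card := hitIdx_le (by rw [h.1]; exact hA)
  have hlt : ¬ hitIdx F σ < A.card := fun hlt => h.2 _ hlt (hitIdx_spec hex)
  have : hitIdx F σ = A.card := le_antisymm hle (not_lt.1 hlt)
  rw [fh, this, h.1]

lemma fh_subset {F : Finset (Finset (Fin n))} {σ : Equiv.Perm (Fin n)} {B : Finset (Fin n)}
    (hB : B ∈ F) (hIB : initSeg σ B.card = B) : fh F σ ⊆ B := by
  have hle : hitIdx F σ ≤ B.card := hitIdx_le (by rw [hIB]; exact hB)
  rw [fh, ← hIB]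
  exact initSeg_mono σ hle

end UpLubell

open UpLubell in
/-- Let `F` be a nonempty family of subsets of `[n]` and let `p` be the probability
that a uniformly random maximal chain of `2^[n]` meets `F`.  Then some `A ∈ F`
satisfies `ℓ(F; [A,[n]]) ≥ ℓ(F)/p`, where
`ℓ(F;[A,[n]]) = Σ_{B∈F, A⊆B} 1/C(n-|A|, |B|-|A|)`. -/
theorem exists_up_lubell_ge (n : ℕ) (F : Finset (Finset (Fin n))) (hF : F.Nonempty)
    (p : ℝ)
    (hp : p = ((Finset.univ.filter
        (fun σ : Equiv.Perm (Fin n) => ∃ A ∈ F, initSeg σ A.card = A)).card : ℝ)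
        / (Nat.factorial n)) :
    ∃ A ∈ F,
      (∑ B ∈ F.filter (fun B => A ⊆ B), (1 : ℝ) / ((n - A.card).choose (B.card - A.card)))
        ≥ (∑ A ∈ F, (1 : ℝ) / (n.choose A.card)) / p := by
  set M := Finset.univ.filter
      (fun σ : Equiv.Perm (Fin n) => ∃ A ∈ F, initSeg σ A.card = A) with hM
  classical
  obtain ⟨A₀, hA₀⟩ := hF
  have hcardle : ∀ A : Finset (Fin n), A.card ≤ n := fun A => by
    simpa using Finset.card_le_univ A
  have hexM : ∀ σ ∈ M, ∃ j, initSeg σ j ∈ F := by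
    intro σ hσ
    rw [hM, Finset.mem_filter] at hσ
    obtain ⟨_, A, hA, hIA⟩ := hσ
    exact ⟨A.card, by rw [hIA]; exact hA⟩
  have hidx_le : ∀ σ ∈ M, hitIdx F σ ≤ n := by
    intro σ hσ
    rw [hM, Finset.mem_filter] at hσ
    obtain ⟨_, A, hA, hIA⟩ := hσ
    exact le_trans (hitIdx_le (by rw [hIA]; exact hA)) (hcardle A)
  have hfh_mem : ∀ σ ∈ M, fh F σ ∈ F := fun σ hσ => fh_mem (hexM σ hσ)
  -- nonemptiness of M
  have hMne : M.Nonempty := by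
    have hc : (lowSet n A₀.card).card = A₀.card := lowSet_card (hcardle A₀)
    obtain ⟨π, hfix, him⟩ := exists_perm_fix_image (a := 0) hc
      (by rw [lowSet_zero]; exact Finset.empty_subset _)
      (by rw [lowSet_zero]; exact Finset.empty_subset _)
    refine ⟨π, ?_⟩
    rw [hM, Finset.mem_filter]
    exact ⟨Finset.mem_univ _, A₀, hA₀, by rw [initSeg_eq_image]; exact him⟩
  -- key per-B identity
  have perB : ∀ B ∈ F,
      (∑ σ ∈ M, if fh F σ ⊆ B
        then (1:ℝ)/((n - (fh F σ).card).choose (B.card - (fh F σ).card))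
        else 0)
      = ((Finset.univ.filter
          (fun σ : Equiv.Perm (Fin n) => initSeg σ B.card = B)).card : ℝ) := by
    intro B hB
    -- LHS: fiberwise over first hit
    rw [← Finset.sum_fiberwise_of_maps_to hfh_mem]
    have hfib : ∀ A ∈ F, M.filter (fun σ => fh F σ = A)
        = Finset.univ.filter (fun σ : Equiv.Perm (Fin n) => isFH F σ A) := by
      intro A hA
      ext σ
      simp only [Finset.mem_filter, Finset.mem_univ, true_and]
      constructor
      · rintro ⟨hσM, hfh⟩
        rw [← hfh]
        exact isFH_fh (hexM σ hσM) (hidx_le σ hσM)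
      · intro hisFH
        refine ⟨?_, fh_eq hA hisFH⟩
        rw [hM, Finset.mem_filter]
        exact ⟨Finset.mem_univ _, A, hA, hisFH.1⟩
    have LHSstep : ∀ A ∈ F,
        (∑ σ ∈ M.filter (fun σ => fh F σ = A),
          if fh F σ ⊆ B
          then (1:ℝ)/((n - (fh F σ).card).choose (B.card - (fh F σ).card))
          else 0)
        = if A ⊆ B
          then ((Finset.univ.filter (fun σ : Equiv.Perm (Fin n) =>
              isFH F σ A ∧ initSeg σ B.card = B)).card : ℝ)
          else 0 := by
      intro A hA
      have h1 : (∑ σ ∈ M.filter (fun σ => fh F σ = A),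
          if fh F σ ⊆ B
          then (1:ℝ)/((n - (fh F σ).card).choose (B.card - (fh F σ).card))
          else 0)
          = ∑ _σ ∈ M.filter (fun σ => fh F σ = A),
            (if A ⊆ B then (1:ℝ)/((n - A.card).choose (B.card - A.card)) else 0) := by
        refine Finset.sum_congr rfl (fun σ hσ => ?_)
        rw [(Finset.mem_filter.1 hσ).2]
      rw [h1, Finset.sum_const, hfib A hA, nsmul_eq_mul]
      by_cases hsub : A ⊆ B
      · rw [if_pos hsub, if_pos hsub, key_count F hsub (hcardle B)]
        have hle : B.card - A.card ≤ n - A.card := by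
          have h1 := hcardle B
          have h2 := Finset.card_le_card hsub
          omega
        have hCpos : (0:ℝ) < ((n - A.card).choose (B.card - A.card) : ℝ) := by
          exact_mod_cast Nat.choose_pos hle
        push_cast
        field_simp
      · rw [if_neg hsub, if_neg hsub, mul_zero]
    rw [Finset.sum_congr rfl LHSstep]
    -- RHS: fiberwise over first hit
    have hmaps2 : ∀ σ ∈ Finset.univ.filter
        (fun σ : Equiv.Perm (Fin n) => initSeg σ B.card = B),
        fh F σ ∈ F.filter (fun A => A ⊆ B) := by
      intro σ hσ
      rw [Finset.mem_filter] at hσ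
      have hex : ∃ j, initSeg σ j ∈ F := ⟨B.card, by rw [hσ.2]; exact hB⟩
      rw [Finset.mem_filter]
      exact ⟨fh_mem hex, fh_subset hB hσ.2⟩
    rw [Finset.card_eq_sum_card_fiberwise hmaps2]
    have hfib2 : ∀ A ∈ F.filter (fun A => A ⊆ B),
        (Finset.univ.filter
          (fun σ : Equiv.Perm (Fin n) => initSeg σ B.card = B)).filter
            (fun σ => fh F σ = A)
        = Finset.univ.filter (fun σ : Equiv.Perm (Fin n) =>
            isFH F σ A ∧ initSeg σ B.card = B) := by
      intro A hA
      rw [Finset.mem_filter] at hA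
      ext σ
      simp only [Finset.mem_filter, Finset.mem_univ, true_and]
      constructor
      · rintro ⟨hIB, hfh⟩
        have hex : ∃ j, initSeg σ j ∈ F := ⟨B.card, by rw [hIB]; exact hB⟩
        have hidx : hitIdx F σ ≤ n :=
          le_trans (hitIdx_le (by rw [hIB]; exact hB)) (hcardle B)
        refine ⟨?_, hIB⟩
        rw [← hfh]
        exact isFH_fh hex hidx
      · rintro ⟨hisFH, hIB⟩
        exact ⟨hIB, fh_eq hA.1 hisFH⟩
    rw [← Finset.sum_filter]
    push_cast
    refine Finset.sum_congr rfl (fun A hA => ?_)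
    rw [hfib2 A hA]
  -- total sum identity
  set L : ℝ := ∑ A ∈ F, (1:ℝ)/(n.choose A.card) with hL
  have main : (∑ σ ∈ M, ∑ B ∈ F.filter (fun B => fh F σ ⊆ B),
      (1:ℝ)/((n - (fh F σ).card).choose (B.card - (fh F σ).card)))
      = L * (n.factorial : ℝ) := by
    have e1 : ∀ σ ∈ M, (∑ B ∈ F.filter (fun B => fh F σ ⊆ B),
        (1:ℝ)/((n - (fh F σ).card).choose (B.card - (fh F σ).card)))
        = ∑ B ∈ F, if fh F σ ⊆ B
            then (1:ℝ)/((n - (fh F σ).card).choose (B.card - (fh F σ).card))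
            else 0 := fun σ _ => Finset.sum_filter _ _
    rw [Finset.sum_congr rfl e1, Finset.sum_comm, Finset.sum_congr rfl perB,
      hL, Finset.sum_mul]
    refine Finset.sum_congr rfl (fun B hB => ?_)
    have h := count_initSeg B (hcardle B)
    have hC : (0:ℝ) < (n.choose B.card : ℝ) := by
      exact_mod_cast Nat.choose_pos (hcardle B)
    have h' : (n.factorial : ℝ) = (n.choose B.card : ℝ)
        * ((Finset.univ.filter
          (fun σ : Equiv.Perm (Fin n) => initSeg σ B.card = B)).card : ℝ) := by
      exact_mod_cast h
    rw [h']
    field_simp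
  -- averaging
  have hMpos : (0:ℝ) < (M.card : ℝ) := by exact_mod_cast Finset.card_pos.2 hMne
  have hfact : (0:ℝ) < (n.factorial : ℝ) := by exact_mod_cast n.factorial_pos
  have havg : (∑ _σ ∈ M, L * (n.factorial : ℝ) / (M.card : ℝ))
      ≤ ∑ σ ∈ M, ∑ B ∈ F.filter (fun B => fh F σ ⊆ B),
          (1:ℝ)/((n - (fh F σ).card).choose (B.card - (fh F σ).card)) := by
    rw [main, Finset.sum_const, nsmul_eq_mul]
    rw [mul_div_cancel₀ _ (ne_of_gt hMpos)]
  obtain ⟨σ, hσM, hσge⟩ := Finset.exists_le_of_sum_le hMne havg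
  refine ⟨fh F σ, hfh_mem σ hσM, ?_⟩
  have hLp : L / p = L * (n.factorial : ℝ) / (M.card : ℝ) := by
    rw [hp]
    field_simp
  rw [ge_iff_le, hLp]
  exact hσge

namespace UpLubell
end UpLubell
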